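/- Let β>2, κ>0 and ξ>0. Then the function x ↦ 1 − 1/(1 + ξ·(κ·‖x‖)^{−β}) is integrable on ℝ² (with respect to two-dimensional Lebesgue measure) and ∫_{ℝ²} (1 − 1/(1 + ξ·(κ·‖x‖)^{−β})) dx = (π/κ²)·ξ^{2/β}·Γ(1−2/β)·Γ(1+2/β). (The Laplace-functional integral over the plane which yields the Laplace transform exp(−λ·(π/κ²)·Γ(1−2/β)·Γ(1+2/β)·ξ^{2/β}) of the total interference from a Poisson field of density λ of Rayleigh-faded transmitters.) -/

import Mathlib

open Real MeasureTheory Set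

/-- integrability and value of `∫ u in Ioi 0, u * exp (-u^p)`. -/
lemma aux0 {p : ℝ} (hp : 1 ≤ p) :
    IntegrableOn (fun u : ℝ => u * exp (-u ^ p)) (Ioi 0) ∧
    ∫ u in Ioi (0:ℝ), u * exp (-u ^ p) = (1 / p) * Real.Gamma (2 / p) := by
  have hp0 : (0:ℝ) < p := lt_of_lt_of_le one_pos hp
  have hcongr : EqOn (fun u : ℝ => u ^ (1:ℝ) * exp (-u ^ p))
      (fun u : ℝ => u * exp (-u ^ p)) (Ioi 0) := by
    intro u hu
    simp [Real.rpow_one]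
  constructor
  · exact (integrableOn_rpow_mul_exp_neg_rpow (by norm_num) hp0).congr_fun hcongr
      measurableSet_Ioi
  · rw [← setIntegral_congr_fun measurableSet_Ioi hcongr,
      integral_rpow_mul_exp_neg_rpow hp0 (by norm_num)]
    norm_num

/-- `∫ t in Ioi 0, t * exp (-(y * t ^ p))` for `y > 0`, `1 ≤ p`. -/
lemma aux1 {p : ℝ} (hp : 1 ≤ p) {y : ℝ} (hy : 0 < y) :
    IntegrableOn (fun t : ℝ => t * exp (-(y * t ^ p))) (Ioi 0) ∧
    ∫ t in Ioi (0:ℝ), t * exp (-(y * t ^ p)) =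
      (y ^ (1/p))⁻¹ * ((y ^ (1/p))⁻¹ * ((1 / p) * Real.Gamma (2 / p))) := by
  have hp0 : (0:ℝ) < p := lt_of_lt_of_le one_pos hp
  have hc : (0:ℝ) < y ^ (1/p) := Real.rpow_pos_of_pos hy _
  set c : ℝ := y ^ (1/p) with hcdef
  have hcp : c ^ p = y := by
    rw [hcdef, ← Real.rpow_mul hy.le, one_div_mul_cancel hp0.ne', Real.rpow_one]
  set g : ℝ → ℝ := fun u => u * exp (-u ^ p) with hg
  have key : EqOn (fun t : ℝ => t * exp (-(y * t ^ p)))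
      (fun t : ℝ => c⁻¹ * g (c * t)) (Ioi 0) := by
    intro t ht
    have ht0 : (0:ℝ) < t := ht
    simp only [hg]
    rw [Real.mul_rpow hc.le ht0.le, hcp]
    field_simp
  constructor
  · refine (IntegrableOn.congr_fun ?_ key.symm measurableSet_Ioi)
    refine Integrable.const_mul ?_ _
    have := (integrableOn_Ioi_comp_mul_left_iff g 0 hc).2 ?_
    · exact this
    · simpa using (aux0 hp).1
  · rw [setIntegral_congr_fun measurableSet_Ioi key, integral_const_mul,
      integral_comp_mul_left_Ioi g 0 hc, mul_zero, smul_eq_mul, (aux0 hp).2]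

lemma hexp_aux {c : ℝ} (hc : 0 < c) : ∫ y in Ioi (0:ℝ), exp (-(c * y)) = c⁻¹ := by
  have := integral_comp_mul_left_Ioi (fun u : ℝ => exp (-u)) 0 hc
  simp only [mul_zero] at this
  rw [this, integral_exp_neg_Ioi, neg_zero, Real.exp_zero, smul_eq_mul, mul_one]

lemma auxJ {β : ℝ} (hβ : 2 < β) :
    ∫ t in Ioi (0:ℝ), t / (1 + t ^ β)
      = Real.Gamma (1 - 2 / β) * ((1 / β) * Real.Gamma (2 / β)) := by
  have hβ0 : (0:ℝ) < β := by linarith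
  have hβ1 : (1:ℝ) ≤ β := by linarith
  have h2β : 0 < 1 - 2 / β := by
    rw [sub_pos, div_lt_one hβ0]; linarith
  set C : ℝ := (1 / β) * Real.Gamma (2 / β) with hC
  have hC0 : 0 ≤ C := by
    have := Real.Gamma_pos_of_pos (show 0 < 2 / β by positivity)
    positivity
  set F : ℝ → ℝ → ℝ := fun t y => t * exp (-((1 + t ^ β) * y)) with hF
  have hmeas : Measurable fun t : ℝ => t / (1 + t ^ β) := by
    fun_prop
  -- step 1 : pointwise representation as an integral in y
  have step1 : ∀ t ∈ Ioi (0:ℝ),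
      ENNReal.ofReal (t / (1 + t ^ β))
        = ∫⁻ y in Ioi (0:ℝ), ENNReal.ofReal (F t y) := by
    intro t ht
    have ht0 : (0:ℝ) < t := ht
    have hc : (0:ℝ) < 1 + t ^ β := by positivity
    have hint : IntegrableOn (fun y => F t y) (Ioi 0) := by
      have : IntegrableOn (fun y : ℝ => exp (-(1 + t ^ β) * y)) (Ioi 0) :=
        exp_neg_integrableOn_Ioi 0 hc
      simpa only [hF, neg_mul, IntegrableOn] using this.const_mul t
    have hval : ∫ y in Ioi (0:ℝ), F t y = t / (1 + t ^ β) := by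
      simp only [hF]
      rw [integral_const_mul, hexp_aux hc, div_eq_mul_inv]
    rw [← hval, ofReal_integral_eq_lintegral_ofReal hint ?_]
    exact (ae_restrict_iff' measurableSet_Ioi).2 (ae_of_all _ fun y hy => by
      have : (0:ℝ) < y := hy
      positivity)
  -- step 2 : Tonelli swap
  have hFmeas : Measurable (Function.uncurry fun t y => ENNReal.ofReal (F t y)) := by
    apply Measurable.ennreal_ofReal
    simp only [hF, Function.uncurry]
    fun_prop
  have swap : ∫⁻ t in Ioi (0:ℝ), ∫⁻ y in Ioi (0:ℝ), ENNReal.ofReal (F t y)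
      = ∫⁻ y in Ioi (0:ℝ), ∫⁻ t in Ioi (0:ℝ), ENNReal.ofReal (F t y) :=
    lintegral_lintegral_swap hFmeas.aemeasurable
  -- step 3 : the inner t-integral for fixed y > 0
  have step3 : ∀ y ∈ Ioi (0:ℝ),
      (∫⁻ t in Ioi (0:ℝ), ENNReal.ofReal (F t y))
        = ENNReal.ofReal (exp (-y) * ((y ^ (1/β))⁻¹ * ((y ^ (1/β))⁻¹ * C))) := by
    intro y hy
    have hy0 : (0:ℝ) < y := hy
    have hFy : (fun t => F t y) = fun t => exp (-y) * (t * exp (-(y * t ^ β))) := by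
      funext t
      simp only [hF]
      rw [mul_comm (exp (-y)), mul_assoc, ← Real.exp_add]
      ring_nf
    have hint : IntegrableOn (fun t => F t y) (Ioi 0) := by
      rw [hFy]
      exact ((aux1 hβ1 hy0).1.const_mul _)
    have hval : ∫ t in Ioi (0:ℝ), F t y
        = exp (-y) * ((y ^ (1/β))⁻¹ * ((y ^ (1/β))⁻¹ * C)) := by
      rw [hFy, integral_const_mul, (aux1 hβ1 hy0).2]
    rw [← hval, ofReal_integral_eq_lintegral_ofReal hint ?_]
    exact (ae_restrict_iff' measurableSet_Ioi).2 (ae_of_all _ fun t ht => by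
      have : (0:ℝ) < t := ht
      positivity)
  -- step 4 : the outer y-integral is a Gamma integral
  have step4 : ∫⁻ y in Ioi (0:ℝ),
      ENNReal.ofReal (exp (-y) * ((y ^ (1/β))⁻¹ * ((y ^ (1/β))⁻¹ * C)))
        = ENNReal.ofReal (Real.Gamma (1 - 2 / β) * C) := by
    have hcongr : ∀ y ∈ Ioi (0:ℝ),
        exp (-y) * ((y ^ (1/β))⁻¹ * ((y ^ (1/β))⁻¹ * C))
          = exp (-y) * y ^ (1 - 2 / β - 1) * C := by
      intro y hy
      have hy0 : (0:ℝ) < y := hy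
      have : (y ^ (1/β : ℝ))⁻¹ * (y ^ (1/β : ℝ))⁻¹ = y ^ (1 - 2 / β - 1) := by
        rw [← mul_inv, ← Real.rpow_add hy0, ← Real.rpow_neg hy0.le]
        congr 1
        field_simp
        norm_num
      rw [← this]; ring
    rw [setLIntegral_congr_fun measurableSet_Ioi (fun y hy => by
      rw [hcongr y hy])]
    have hint : IntegrableOn (fun y : ℝ => exp (-y) * y ^ (1 - 2 / β - 1) * C) (Ioi 0) :=
      (Real.GammaIntegral_convergent h2β).mul_const C
    rw [← ofReal_integral_eq_lintegral_ofReal hint ?_]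
    · rw [integral_mul_const, ← Real.Gamma_eq_integral h2β]
    · exact (ae_restrict_iff' measurableSet_Ioi).2 (ae_of_all _ fun y hy => by
        have : (0:ℝ) < y := hy
        positivity)
  -- assemble
  have hL : ∫⁻ t in Ioi (0:ℝ), ENNReal.ofReal (t / (1 + t ^ β))
      = ENNReal.ofReal (Real.Gamma (1 - 2 / β) * C) := by
    rw [setLIntegral_congr_fun measurableSet_Ioi step1, swap,
      setLIntegral_congr_fun measurableSet_Ioi step3, step4]
  rw [integral_eq_lintegral_of_nonneg_ae ?_ hmeas.aestronglyMeasurable.restrict, hL,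
    ENNReal.toReal_ofReal (by positivity)]
  exact (ae_restrict_iff' measurableSet_Ioi).2 (ae_of_all _ fun t ht => by
    have : (0:ℝ) < t := ht
    positivity)

lemma g_nonneg {β κ ξ r : ℝ} (hξ : 0 < ξ) (hr : 0 ≤ κ * r) :
    0 ≤ 1 - 1 / (1 + ξ * (κ * r) ^ (-β)) := by
  have ha : 0 ≤ ξ * (κ * r) ^ (-β) :=
    mul_nonneg hξ.le (Real.rpow_nonneg hr _)
  have : 1 / (1 + ξ * (κ * r) ^ (-β)) ≤ 1 := by
    apply div_le_one_of_le₀ <;> linarith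
  linarith

lemma g_bound {β κ ξ : ℝ} (hβ0 : 0 < β) (hκ : 0 < κ) (hξ : 0 < ξ) {r : ℝ} (hr : 0 ≤ r) :
    1 - 1 / (1 + ξ * (κ * r) ^ (-β))
      ≤ (2:ℝ) ^ β * max 1 (ξ * κ ^ (-β)) * (1 + r) ^ (-β) := by
  have h2 : (0:ℝ) < (2:ℝ) ^ β := Real.rpow_pos_of_pos two_pos _
  have h1r : (0:ℝ) < 1 + r := by linarith
  rcases le_total r 1 with hr1 | hr1
  · -- small r : bound by 1
    have hb1 : 1 - 1 / (1 + ξ * (κ * r) ^ (-β)) ≤ 1 := by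
      have : 0 ≤ 1 / (1 + ξ * (κ * r) ^ (-β)) := by
        have ha : 0 ≤ ξ * (κ * r) ^ (-β) :=
          mul_nonneg hξ.le (Real.rpow_nonneg (by positivity) _)
        positivity
      linarith
    have hpow : (1 + r) ^ β ≤ (2:ℝ) ^ β :=
      Real.rpow_le_rpow h1r.le (by linarith) hβ0.le
    have hinv : (2:ℝ) ^ (-β) ≤ (1 + r) ^ (-β) := by
      rw [Real.rpow_neg h1r.le, Real.rpow_neg (by norm_num : (0:ℝ) ≤ 2)]
      exact inv_anti₀ (Real.rpow_pos_of_pos h1r _) hpow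
    calc 1 - 1 / (1 + ξ * (κ * r) ^ (-β)) ≤ 1 := hb1
      _ = (2:ℝ) ^ β * (2:ℝ) ^ (-β) := by
          rw [← Real.rpow_add two_pos]; simp
      _ ≤ (2:ℝ) ^ β * max 1 (ξ * κ ^ (-β)) * (1 + r) ^ (-β) := by
          have : (2:ℝ) ^ β * (2:ℝ) ^ (-β) ≤ (2:ℝ) ^ β * (1 + r) ^ (-β) := by
            exact mul_le_mul_of_nonneg_left hinv h2.le
          calc (2:ℝ) ^ β * (2:ℝ) ^ (-β) ≤ (2:ℝ) ^ β * (1 + r) ^ (-β) := this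
            _ ≤ (2:ℝ) ^ β * max 1 (ξ * κ ^ (-β)) * (1 + r) ^ (-β) := by
                have hge : (1:ℝ) ≤ max 1 (ξ * κ ^ (-β)) := le_max_left _ _
                have hnn : (0:ℝ) ≤ (1 + r) ^ (-β) := Real.rpow_nonneg h1r.le _
                have h3 := mul_le_mul_of_nonneg_right
                  (mul_le_mul_of_nonneg_left hge h2.le) hnn
                linarith [h3]
  · -- large r : bound by the tail
    have hr0 : (0:ℝ) < r := by linarith
    have ha0 : (0:ℝ) < ξ * (κ * r) ^ (-β) := by
      have := Real.rpow_pos_of_pos (mul_pos hκ hr0) (-β)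
      positivity
    have hb1 : 1 - 1 / (1 + ξ * (κ * r) ^ (-β)) ≤ ξ * (κ * r) ^ (-β) := by
      set a := ξ * (κ * r) ^ (-β)
      have h1a : (0:ℝ) < 1 + a := by linarith
      have heq : 1 - 1 / (1 + a) = a / (1 + a) := by field_simp; ring
      rw [heq]
      exact div_le_self ha0.le (by linarith)
    have hsplit : (κ * r) ^ (-β) = κ ^ (-β) * r ^ (-β) :=
      Real.mul_rpow hκ.le hr0.le
    have hpow : (1 + r) ^ β ≤ (2:ℝ) ^ β * r ^ β := by
      have : (1 + r) ^ β ≤ (2 * r) ^ β :=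
        Real.rpow_le_rpow h1r.le (by linarith) hβ0.le
      rwa [Real.mul_rpow (by norm_num) hr0.le] at this
    have h1rp : (0:ℝ) < (1 + r) ^ β := Real.rpow_pos_of_pos h1r _
    have hrp : (0:ℝ) < r ^ β := Real.rpow_pos_of_pos hr0 _
    have hinv : r ^ (-β) ≤ (2:ℝ) ^ β * (1 + r) ^ (-β) := by
      rw [Real.rpow_neg hr0.le, Real.rpow_neg h1r.le]
      have h1 : ((2:ℝ) ^ β * r ^ β)⁻¹ ≤ ((1 + r) ^ β)⁻¹ :=
        inv_anti₀ h1rp hpow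
      have h2' : (r ^ β)⁻¹ = (2:ℝ) ^ β * ((2:ℝ) ^ β * r ^ β)⁻¹ := by
        rw [mul_inv]
        field_simp
      rw [h2']
      exact mul_le_mul_of_nonneg_left h1 h2.le
    calc 1 - 1 / (1 + ξ * (κ * r) ^ (-β)) ≤ ξ * (κ * r) ^ (-β) := hb1
      _ = ξ * κ ^ (-β) * r ^ (-β) := by rw [hsplit]; ring
      _ ≤ ξ * κ ^ (-β) * ((2:ℝ) ^ β * (1 + r) ^ (-β)) := by
          refine mul_le_mul_of_nonneg_left hinv ?_
          have := Real.rpow_nonneg hκ.le (-β)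
          positivity
      _ ≤ (2:ℝ) ^ β * max 1 (ξ * κ ^ (-β)) * (1 + r) ^ (-β) := by
          have hle : ξ * κ ^ (-β) ≤ max 1 (ξ * κ ^ (-β)) := le_max_right _ _
          have hnn : (0:ℝ) ≤ (1 + r) ^ (-β) := Real.rpow_nonneg h1r.le _
          have h3 := mul_le_mul_of_nonneg_right
            (mul_le_mul_of_nonneg_left hle h2.le) hnn
          linarith [h3]

/-- The Laplace-functional integral over the plane which yields the Laplace
transform of the total interference from a Poisson field of Rayleigh-faded
transmitters: for `β > 2`, `κ > 0`, `ξ > 0`, the function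
`x ↦ 1 − 1/(1 + ξ·(κ‖x‖)^{−β})` is integrable on `ℝ²` and its integral equals
`(π/κ²)·ξ^{2/β}·Γ(1−2/β)·Γ(1+2/β)`. -/
theorem laplace_functional_plane_integral
    (β κ ξ : ℝ) (hβ : 2 < β) (hκ : 0 < κ) (hξ : 0 < ξ) :
    Integrable (fun x : EuclideanSpace ℝ (Fin 2) =>
        1 - 1 / (1 + ξ * (κ * ‖x‖) ^ (-β))) ∧
    ∫ x : EuclideanSpace ℝ (Fin 2), (1 - 1 / (1 + ξ * (κ * ‖x‖) ^ (-β))) =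
      (π / κ ^ 2) * ξ ^ (2 / β) * Real.Gamma (1 - 2 / β) *
        Real.Gamma (1 + 2 / β) := by
  have hβ0 : (0:ℝ) < β := by linarith
  have h2β : (0:ℝ) < 2 / β := by positivity
  -- measurability
  have hmeas : Measurable fun x : EuclideanSpace ℝ (Fin 2) =>
      1 - 1 / (1 + ξ * (κ * ‖x‖) ^ (-β)) := by fun_prop
  -- integrability
  have hint : Integrable (fun x : EuclideanSpace ℝ (Fin 2) =>
      1 - 1 / (1 + ξ * (κ * ‖x‖) ^ (-β))) := by
    have hfr : ((Module.finrank ℝ (EuclideanSpace ℝ (Fin 2)) : ℝ)) < β := by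
      rw [finrank_euclideanSpace_fin]; exact_mod_cast hβ
    have hint2 : Integrable (fun x : EuclideanSpace ℝ (Fin 2) =>
        (2:ℝ) ^ β * max 1 (ξ * κ ^ (-β)) * (1 + ‖x‖) ^ (-β)) :=
      (integrable_one_add_norm hfr).const_mul _
    refine hint2.mono hmeas.aestronglyMeasurable (ae_of_all _ fun x => ?_)
    have h0 : 0 ≤ 1 - 1 / (1 + ξ * (κ * ‖x‖) ^ (-β)) :=
      g_nonneg hξ (by positivity)
    have hb := g_bound hβ0 hκ hξ (norm_nonneg x)
    have hC : (0:ℝ) ≤ (2:ℝ) ^ β * max 1 (ξ * κ ^ (-β)) * (1 + ‖x‖) ^ (-β) := by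
      have := Real.rpow_nonneg (by positivity : (0:ℝ) ≤ 1 + ‖x‖) (-β)
      have h2 : (0:ℝ) < (2:ℝ) ^ β := Real.rpow_pos_of_pos two_pos _
      have hm : (0:ℝ) ≤ max 1 (ξ * κ ^ (-β)) := le_trans zero_le_one (le_max_left _ _)
      positivity
    rw [Real.norm_eq_abs, Real.norm_eq_abs, abs_of_nonneg h0, abs_of_nonneg hC]
    exact hb
  refine ⟨hint, ?_⟩
  -- reduce to a radial integral
  have hrad := MeasureTheory.integral_fun_norm_addHaar
    (volume : Measure (EuclideanSpace ℝ (Fin 2)))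
    (fun r : ℝ => 1 - 1 / (1 + ξ * (κ * r) ^ (-β)))
  simp only [finrank_euclideanSpace_fin] at hrad
  rw [hrad]
  -- the volume of the unit ball is π
  have hball : ((volume (Metric.ball (0 : EuclideanSpace ℝ (Fin 2)) 1)).toReal) = π := by
    rw [EuclideanSpace.volume_ball]
    simp only [Fintype.card_fin]
    norm_num [Real.Gamma_two, Real.sq_sqrt Real.pi_nonneg,
      ENNReal.toReal_ofReal Real.pi_nonneg]
  rw [measureReal_def, hball]
  -- compute the radial integral by the substitution t = (κ / ξ^(1/β)) y
  set c : ℝ := κ * (ξ ^ (1/β : ℝ))⁻¹ with hc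
  have hξβ : (0:ℝ) < ξ ^ (1/β : ℝ) := Real.rpow_pos_of_pos hξ _
  have hc0 : (0:ℝ) < c := by positivity
  have key : EqOn (fun y : ℝ => y ^ (2-1) • (1 - 1 / (1 + ξ * (κ * y) ^ (-β))))
      (fun y : ℝ => c⁻¹ * ((c * y) / (1 + (c * y) ^ β))) (Set.Ioi 0) := by
    intro y hy
    have hy0 : (0:ℝ) < y := hy
    have hA : (0:ℝ) < (κ * y) ^ β := Real.rpow_pos_of_pos (by positivity) _
    have h1 : (κ * y) ^ (-β) = ((κ * y) ^ β)⁻¹ := Real.rpow_neg (by positivity) β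
    have h2 : (c * y) ^ β = (κ * y) ^ β * ξ⁻¹ := by
      rw [Real.mul_rpow hc0.le hy0.le, hc,
        Real.mul_rpow hκ.le (by positivity : (0:ℝ) ≤ (ξ ^ (1/β:ℝ))⁻¹),
        Real.inv_rpow hξβ.le, ← Real.rpow_mul hξ.le, one_div_mul_cancel hβ0.ne',
        Real.rpow_one, Real.mul_rpow hκ.le hy0.le]
      ring
    have hd1 : (0:ℝ) < 1 + ξ * ((κ * y) ^ β)⁻¹ := by positivity
    have hd2 : (0:ℝ) < 1 + (κ * y) ^ β * ξ⁻¹ := by positivity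
    simp only [pow_one, smul_eq_mul]
    rw [h1, h2]
    field_simp
    ring
  rw [setIntegral_congr_fun measurableSet_Ioi key, integral_const_mul,
    integral_comp_mul_left_Ioi (fun t : ℝ => t / (1 + t ^ β)) 0 hc0, mul_zero,
    smul_eq_mul, auxJ hβ]
  rw [show (1:ℝ) + 2/β = 2/β + 1 by ring, Real.Gamma_add_one h2β.ne']
  have hcinv : c⁻¹ = κ⁻¹ * ξ ^ (1/β : ℝ) := by rw [hc, mul_inv, inv_inv]
  have hxx : ξ ^ (1/β : ℝ) * ξ ^ (1/β : ℝ) = ξ ^ (2/β : ℝ) := by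
    rw [← Real.rpow_add hξ]
    congr 1
    ring
  rw [hcinv]
  simp only [nsmul_eq_mul, smul_eq_mul, Nat.cast_ofNat]
  rw [← hxx]
  field_simp
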